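/- Let X be a topological space whose topology is generated by a normal quasi-uniformity (i.e., there exists a quasi-uniformity 𝓤 on X which is normal and such that for every x ∈ X the sets B(x;U) = {y : (x,y) ∈ U}, U ∈ 𝓤, form a neighborhood base at x). If X is semiregular, then X is completely regular. -/

import Mathlib

open Topology

/-- `B(A;U)`, the `U`-neighborhood of a set `A`. -/
def setBall {X : Type*} (A : Set X) (U : Set (X × X)) : Set X :=
  {y : X | ∃ a ∈ A, (a, y) ∈ U}

/-- A quasi-uniformity on `X` is a filter on `X × X` all of whose members contain
the diagonal, such that every member `U` contains a composition `V ○ V ⊆ U` of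
some member `V` with itself. -/
def IsQuasiUniformity {X : Type*} (𝓤 : Filter (X × X)) : Prop :=
  (∀ U ∈ 𝓤, SetRel.id ⊆ U) ∧ (∀ U ∈ 𝓤, ∃ V ∈ 𝓤, SetRel.comp V V ⊆ U)

/-- A quasi-uniformity on a topological space is normal if
`closure A ⊆ interior (closure B(A;U))` for all `A` and all entourages `U`. -/
def IsNormalQuasiUniformity {X : Type*} [TopologicalSpace X]
    (𝓤 : Filter (X × X)) : Prop :=
  ∀ A : Set X, ∀ U ∈ 𝓤, closure A ⊆ interior (closure (setBall A U))

/-- A quasi-uniformity generates the topology of `X` if for every `x` the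
neighborhood filter of `x` is the filter generated by the balls
`B(x;U) = {y | (x,y) ∈ U}`, `U ∈ 𝓤`. -/
def GeneratesTopology {X : Type*} [TopologicalSpace X]
    (𝓤 : Filter (X × X)) : Prop :=
  ∀ x : X, 𝓝 x = 𝓤.lift' (fun U => {y : X | (x, y) ∈ U})

/-- A topological space is semiregular if every neighborhood `O` of a point `x`
contains `interior (closure U)` for some neighborhood `U` of `x`. -/
def Semiregular (X : Type*) [TopologicalSpace X] : Prop :=
  ∀ x : X, ∀ O ∈ 𝓝 x, ∃ U ∈ 𝓝 x, interior (closure U) ⊆ O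

section Aux

open Set Filter TopologicalSpace Topology

variable {X : Type*} [TopologicalSpace X]

theorem setBall_mono {A : Set X} {U V : Set (X × X)} (h : U ⊆ V) :
    setBall A U ⊆ setBall A V := fun _ ⟨a, ha, hau⟩ => ⟨a, ha, h hau⟩

theorem setBall_comp (A : Set X) (U V : Set (X × X)) :
    setBall (setBall A U) V = setBall A (SetRel.comp U V) := by
  ext y
  constructor
  · rintro ⟨b, ⟨a, ha, hab⟩, hby⟩
    exact ⟨a, ha, b, hab, hby⟩
  · rintro ⟨a, ha, b, hab, hby⟩
    exact ⟨b, ⟨a, ha, hab⟩, hby⟩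

theorem subset_of_compRel_subset {U V : Set (X × X)} (hid : SetRel.id ⊆ U)
    (h : SetRel.comp U U ⊆ V) : U ⊆ V := by
  intro p hp
  exact h ⟨p.1, hid (by simp [SetRel.id]), hp⟩

namespace QUrysohns

/-- Variant of `Urysohns.CU` where the auxiliary predicate is on pairs. -/
structure CU2 {X : Type*} [TopologicalSpace X] (P : Set X → Set X → Prop) where
  protected C : Set X
  protected U : Set X
  protected closed_C : IsClosed C
  protected open_U : IsOpen U
  protected subset : C ⊆ U
  protected P_CU : P C U
  protected hP : ∀ {c u : Set X}, IsClosed c → IsOpen u → c ⊆ u → P c u →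
    ∃ v, IsOpen v ∧ c ⊆ v ∧ closure v ⊆ u ∧ P c v ∧ P (closure v) u

namespace CU2

variable {P : Set X → Set X → Prop}

@[simps C]
def left (c : CU2 P) : CU2 P where
  C := c.C
  U := (c.hP c.closed_C c.open_U c.subset c.P_CU).choose
  closed_C := c.closed_C
  open_U := (c.hP c.closed_C c.open_U c.subset c.P_CU).choose_spec.1
  subset := (c.hP c.closed_C c.open_U c.subset c.P_CU).choose_spec.2.1
  P_CU := (c.hP c.closed_C c.open_U c.subset c.P_CU).choose_spec.2.2.2.1
  hP := c.hP

@[simps U]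
def right (c : CU2 P) : CU2 P where
  C := closure (c.hP c.closed_C c.open_U c.subset c.P_CU).choose
  U := c.U
  closed_C := isClosed_closure
  open_U := c.open_U
  subset := (c.hP c.closed_C c.open_U c.subset c.P_CU).choose_spec.2.2.1
  P_CU := (c.hP c.closed_C c.open_U c.subset c.P_CU).choose_spec.2.2.2.2
  hP := c.hP

theorem left_U_subset_right_C (c : CU2 P) : c.left.U ⊆ c.right.C :=
  subset_closure

theorem left_U_subset (c : CU2 P) : c.left.U ⊆ c.U :=
  Subset.trans c.left_U_subset_right_C c.right.subset

theorem subset_right_C (c : CU2 P) : c.C ⊆ c.right.C :=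
  Subset.trans c.left.subset c.left_U_subset_right_C

noncomputable def approx : ℕ → CU2 P → X → ℝ
  | 0, c, x => indicator c.Uᶜ 1 x
  | n + 1, c, x => midpoint ℝ (approx n c.left x) (approx n c.right x)

theorem approx_of_mem_C (c : CU2 P) (n : ℕ) {x : X} (hx : x ∈ c.C) : c.approx n x = 0 := by
  induction n generalizing c with
  | zero => exact indicator_of_notMem (fun (hU : x ∈ c.Uᶜ) => hU <| c.subset hx) _
  | succ n ihn =>
    simp only [approx]
    rw [ihn, ihn, midpoint_self]
    exacts [c.subset_right_C hx, hx]

theorem approx_of_nmem_U (c : CU2 P) (n : ℕ) {x : X} (hx : x ∉ c.U) : c.approx n x = 1 := by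
  induction n generalizing c with
  | zero =>
    rw [← mem_compl_iff] at hx
    exact indicator_of_mem hx _
  | succ n ihn =>
    simp only [approx]
    rw [ihn, ihn, midpoint_self]
    exacts [hx, fun hU => hx <| c.left_U_subset hU]

theorem approx_nonneg (c : CU2 P) (n : ℕ) (x : X) : 0 ≤ c.approx n x := by
  induction n generalizing c with
  | zero => exact indicator_nonneg (fun _ _ => zero_le_one) _
  | succ n ihn =>
    simp only [approx, midpoint_eq_smul_add, invOf_eq_inv]
    refine mul_nonneg (inv_nonneg.2 zero_le_two) (add_nonneg ?_ ?_) <;> apply ihn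

theorem approx_le_one (c : CU2 P) (n : ℕ) (x : X) : c.approx n x ≤ 1 := by
  induction n generalizing c with
  | zero => exact indicator_apply_le' (fun _ => le_rfl) fun _ => zero_le_one
  | succ n ihn =>
    simp only [approx, midpoint_eq_smul_add, invOf_eq_inv, smul_eq_mul, ← div_eq_inv_mul]
    have := add_le_add (ihn (left c)) (ihn (right c))
    norm_num at this
    exact Iff.mpr (div_le_one zero_lt_two) this

theorem bddAbove_range_approx (c : CU2 P) (x : X) : BddAbove (range fun n => c.approx n x) :=
  ⟨1, fun _ ⟨n, hn⟩ => hn ▸ c.approx_le_one n x⟩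

theorem approx_le_approx_of_U_sub_C {c₁ c₂ : CU2 P} (h : c₁.U ⊆ c₂.C) (n₁ n₂ : ℕ) (x : X) :
    c₂.approx n₂ x ≤ c₁.approx n₁ x := by
  by_cases hx : x ∈ c₁.U
  · calc
      approx n₂ c₂ x = 0 := approx_of_mem_C _ _ (h hx)
      _ ≤ approx n₁ c₁ x := approx_nonneg _ _ _
  · calc
      approx n₂ c₂ x ≤ 1 := approx_le_one _ _ _
      _ = approx n₁ c₁ x := (approx_of_nmem_U _ _ hx).symm

theorem approx_mem_Icc_right_left (c : CU2 P) (n : ℕ) (x : X) :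
    c.approx n x ∈ Icc (c.right.approx n x) (c.left.approx n x) := by
  induction' n with n ihn generalizing c
  · exact ⟨le_rfl, indicator_le_indicator_of_subset (compl_subset_compl.2 c.left_U_subset)
      (fun _ => zero_le_one) _⟩
  · simp only [approx, mem_Icc]
    refine ⟨midpoint_le_midpoint ?_ (ihn _).1, midpoint_le_midpoint (ihn _).2 ?_⟩ <;>
      apply approx_le_approx_of_U_sub_C
    exacts [subset_closure, subset_closure]

theorem approx_le_succ (c : CU2 P) (n : ℕ) (x : X) : c.approx n x ≤ c.approx (n + 1) x := by
  induction' n with n ihn generalizing c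
  · simp only [approx, right_U, right_le_midpoint]
    exact (approx_mem_Icc_right_left c 0 x).2
  · rw [approx, approx]
    exact midpoint_le_midpoint (ihn _) (ihn _)

theorem approx_mono (c : CU2 P) (x : X) : Monotone fun n => c.approx n x :=
  monotone_nat_of_le_succ fun n => c.approx_le_succ n x

protected noncomputable def lim (c : CU2 P) (x : X) : ℝ :=
  ⨆ n, c.approx n x

theorem tendsto_approx_atTop (c : CU2 P) (x : X) :
    Tendsto (fun n => c.approx n x) atTop (𝓝 <| c.lim x) :=
  tendsto_atTop_ciSup (c.approx_mono x) ⟨1, fun _ ⟨_, hn⟩ => hn ▸ c.approx_le_one _ _⟩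

theorem lim_of_mem_C (c : CU2 P) (x : X) (h : x ∈ c.C) : c.lim x = 0 := by
  simp only [CU2.lim, approx_of_mem_C, h, ciSup_const]

theorem lim_of_nmem_U (c : CU2 P) (x : X) (h : x ∉ c.U) : c.lim x = 1 := by
  simp only [CU2.lim, approx_of_nmem_U c _ h, ciSup_const]

theorem lim_eq_midpoint (c : CU2 P) (x : X) :
    c.lim x = midpoint ℝ (c.left.lim x) (c.right.lim x) := by
  refine tendsto_nhds_unique (c.tendsto_approx_atTop x) ((tendsto_add_atTop_iff_nat 1).1 ?_)
  simp only [approx]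
  exact (c.left.tendsto_approx_atTop x).midpoint (c.right.tendsto_approx_atTop x)

theorem approx_le_lim (c : CU2 P) (x : X) (n : ℕ) : c.approx n x ≤ c.lim x :=
  le_ciSup (c.bddAbove_range_approx x) _

theorem lim_nonneg (c : CU2 P) (x : X) : 0 ≤ c.lim x :=
  (c.approx_nonneg 0 x).trans (c.approx_le_lim x 0)

theorem lim_le_one (c : CU2 P) (x : X) : c.lim x ≤ 1 :=
  ciSup_le fun _ => c.approx_le_one _ _

theorem lim_mem_Icc (c : CU2 P) (x : X) : c.lim x ∈ Icc (0 : ℝ) 1 :=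
  ⟨c.lim_nonneg x, c.lim_le_one x⟩

theorem continuous_lim (c : CU2 P) : Continuous c.lim := by
  obtain ⟨h0, h1234, h1⟩ : 0 < (2⁻¹ : ℝ) ∧ (2⁻¹ : ℝ) < 3 / 4 ∧ (3 / 4 : ℝ) < 1 := by norm_num
  refine
    continuous_iff_continuousAt.2 fun x =>
      (Metric.nhds_basis_closedBall_pow (h0.trans h1234) h1).tendsto_right_iff.2 fun n _ => ?_
  simp only [Metric.mem_closedBall]
  induction' n with n ihn generalizing c
  · filter_upwards with y
    rw [pow_zero]
    exact Real.dist_le_of_mem_Icc_01 (c.lim_mem_Icc _) (c.lim_mem_Icc _)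
  · by_cases hxl : x ∈ c.left.U
    · filter_upwards [IsOpen.mem_nhds c.left.open_U hxl, ihn c.left] with _ hyl hyd
      rw [pow_succ', c.lim_eq_midpoint, c.lim_eq_midpoint,
        c.right.lim_of_mem_C _ (c.left_U_subset_right_C hyl),
        c.right.lim_of_mem_C _ (c.left_U_subset_right_C hxl)]
      refine (dist_midpoint_midpoint_le _ _ _ _).trans ?_
      rw [dist_self, add_zero, div_eq_inv_mul]
      gcongr
    · replace hxl : x ∈ c.left.right.Cᶜ :=
        compl_subset_compl.2 c.left.right.subset hxl
      filter_upwards [IsOpen.mem_nhds (isOpen_compl_iff.2 c.left.right.closed_C) hxl,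
        ihn c.left.right, ihn c.right] with y hyl hydl hydr
      replace hxl : x ∉ c.left.left.U :=
        compl_subset_compl.2 c.left.left_U_subset_right_C hxl
      replace hyl : y ∉ c.left.left.U :=
        compl_subset_compl.2 c.left.left_U_subset_right_C hyl
      simp only [pow_succ, c.lim_eq_midpoint, c.left.lim_eq_midpoint,
        c.left.left.lim_of_nmem_U _ hxl, c.left.left.lim_of_nmem_U _ hyl]
      refine (dist_midpoint_midpoint_le _ _ _ _).trans ?_
      refine (div_le_div_of_nonneg_right (add_le_add_left (dist_midpoint_midpoint_le _ _ _ _) _)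
        zero_le_two).trans ?_
      rw [dist_self, zero_add]
      set r := (3 / 4 : ℝ) ^ n
      calc _ ≤ (r / 2 + r) / 2 := by gcongr
        _ = _ := by field_simp; ring

end CU2

end QUrysohns

end Aux

/-- If the topology of `X` is generated by a normal
quasi-uniformity and `X` is semiregular, then `X` is completely regular. -/
theorem completelyRegular_of_semiregular_normally_quasiUniformizable {X : Type*}
    [TopologicalSpace X]
    (h : ∃ 𝓤 : Filter (X × X), IsQuasiUniformity 𝓤 ∧ IsNormalQuasiUniformity 𝓤 ∧
      GeneratesTopology 𝓤)
    (hs : Semiregular X) : CompletelyRegularSpace X := by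
  obtain ⟨𝓤, ⟨hdiag, hcomp⟩, hnorm, hgen⟩ := h
  constructor
  intro x K hK hxK
  -- find `U₀ ∈ 𝓤` with `interior (closure (setBall {x} U₀)) ⊆ Kᶜ`
  have hO : Kᶜ ∈ nhds x := hK.isOpen_compl.mem_nhds hxK
  obtain ⟨N, hN, hNO⟩ := hs x Kᶜ hO
  rw [hgen x] at hN
  obtain ⟨U₀, hU₀, hU₀N⟩ :=
    (Filter.mem_lift'_sets (h := fun U => {y : X | (x, y) ∈ U}) (fun U V hUV y hy => hUV hy)).mp hN
  have hball : ∀ U : Set (X × X), setBall {x} U = {y : X | (x, y) ∈ U} := by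
    intro U
    ext y
    simp [setBall]
  have hU₀O : interior (closure (setBall {x} U₀)) ⊆ Kᶜ := by
    rw [hball]
    exact (interior_mono (closure_mono hU₀N)).trans hNO
  -- shrinking entourages
  obtain ⟨W, hW, hWU₀⟩ := hcomp U₀ hU₀
  obtain ⟨V, hV, hVW⟩ := hcomp W hW
  obtain ⟨V', hV', hV'V⟩ := hcomp V hV
  have hWsub : W ⊆ U₀ := subset_of_compRel_subset (hdiag W hW) hWU₀
  have hVsub : V ⊆ W := subset_of_compRel_subset (hdiag V hV) hVW
  -- the pair predicate
  set P : Set X → Set X → Prop := fun c u =>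
    ∃ A : Set X, ∃ W' ∈ 𝓤, c ⊆ closure A ∧ closure (setBall A W') ⊆ u with hP_def
  have hstep : ∀ {c u : Set X}, IsClosed c → IsOpen u → c ⊆ u → P c u →
      ∃ v, IsOpen v ∧ c ⊆ v ∧ closure v ⊆ u ∧ P c v ∧ P (closure v) u := by
    rintro c u _ _ _ ⟨A, W₀, hW₀, hcA, hAWu⟩
    obtain ⟨V₁, hV₁, hV₁W₀⟩ := hcomp W₀ hW₀
    obtain ⟨V₂, hV₂, hV₂V₁⟩ := hcomp V₁ hV₁
    obtain ⟨V₃, hV₃, hV₃V₂⟩ := hcomp V₂ hV₂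
    have hV₁sub : V₁ ⊆ W₀ := subset_of_compRel_subset (hdiag V₁ hV₁) hV₁W₀
    have hV₂sub : V₂ ⊆ V₁ := subset_of_compRel_subset (hdiag V₂ hV₂) hV₂V₁
    refine ⟨interior (closure (setBall A V₂)), isOpen_interior,
      hcA.trans (hnorm A V₂ hV₂), ?_, ?_, ?_⟩
    · have h1 : closure (interior (closure (setBall A V₂))) ⊆ closure (setBall A V₂) :=
        closure_minimal interior_subset isClosed_closure
      exact h1.trans ((closure_mono (setBall_mono (hV₂sub.trans hV₁sub))).trans hAWu)
    · refine ⟨A, V₃, hV₃, hcA, ?_⟩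
      have h2 : closure (setBall A V₃) ⊆ interior (closure (setBall (setBall A V₃) V₃)) :=
        hnorm (setBall A V₃) V₃ hV₃
      rw [setBall_comp] at h2
      exact h2.trans (interior_mono (closure_mono (setBall_mono hV₃V₂)))
    · refine ⟨setBall A V₂, V₁, hV₁, ?_, ?_⟩
      · exact closure_minimal interior_subset isClosed_closure
      · rw [setBall_comp]
        have h3 : SetRel.comp V₂ V₁ ⊆ W₀ := fun p ⟨y, hy1, hy2⟩ => hV₁W₀ ⟨y, hV₂sub hy1, hy2⟩
        exact (closure_mono (setBall_mono h3)).trans hAWu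
  -- the root pair
  have hxC : x ∈ closure (setBall {x} V) :=
    subset_closure ⟨x, rfl, hdiag V hV (by simp [SetRel.id])⟩
  have hCU : closure (setBall {x} V) ⊆ interior (closure (setBall {x} W)) := by
    have h4 : closure (setBall {x} V) ⊆ interior (closure (setBall (setBall {x} V) V)) :=
      hnorm (setBall {x} V) V hV
    rw [setBall_comp] at h4
    exact h4.trans (interior_mono (closure_mono (setBall_mono hVW)))
  set c : QUrysohns.CU2 P :=
  { C := closure (setBall {x} V)
    U := interior (closure (setBall {x} W))
    closed_C := isClosed_closure
    open_U := isOpen_interior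
    subset := hCU
    P_CU := by
      refine ⟨setBall {x} V, V', hV', subset_rfl, ?_⟩
      have h5 : closure (setBall (setBall {x} V) V') ⊆
          interior (closure (setBall (setBall (setBall {x} V) V') V')) :=
        hnorm _ V' hV'
      rw [setBall_comp, setBall_comp, SetRel.comp_assoc] at h5
      rw [setBall_comp]
      refine h5.trans (interior_mono (closure_mono (setBall_mono ?_)))
      exact (SetRel.comp_subset_comp subset_rfl hV'V).trans hVW
    hP := hstep }
  -- the separating function
  have hUK : ∀ y ∈ K, y ∉ c.U := by
    intro y hyK hyU
    have : y ∈ interior (closure (setBall {x} U₀)) :=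
      interior_mono (closure_mono (setBall_mono hWsub)) hyU
    exact hU₀O this hyK
  refine ⟨fun y => ⟨c.lim y, c.lim_mem_Icc y⟩, ?_, ?_, ?_⟩
  · exact Continuous.subtype_mk c.continuous_lim _
  · exact Subtype.ext (c.lim_of_mem_C x hxC)
  · intro y hy
    exact Subtype.ext (c.lim_of_nmem_U y (hUK y hy))
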